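/- Let r_m, r_a ∈ ℝ³ and ρ₁, ρ₂ > 0, and set A = ρ₁ r_m r_mᵀ + ρ₂ r_a r_aᵀ. Then the symmetric matrix Ā := (1/2)(tr(A)·I − A) is positive definite if and only if r_m and r_a are linearly independent (equivalently, r_m × r_a ≠ 0). -/

import Mathlib

open Matrix

/-- If `x ≠ 0` and both `v` and `w` have zero cross product with `x`,
then `v ⨯₃ w = 0`. -/
lemma cross_aux (v w x : Fin 3 → ℝ) (hx : x ≠ 0) (hv : v ⨯₃ x = 0) (hw : w ⨯₃ x = 0) :
    v ⨯₃ w = 0 := by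
  have A0 : v 1 * x 2 - v 2 * x 1 = 0 := by
    have := congrFun hv 0; simpa [cross_apply] using this
  have A1 : v 2 * x 0 - v 0 * x 2 = 0 := by
    have := congrFun hv 1; simpa [cross_apply] using this
  have A2 : v 0 * x 1 - v 1 * x 0 = 0 := by
    have := congrFun hv 2; simpa [cross_apply] using this
  have B0 : w 1 * x 2 - w 2 * x 1 = 0 := by
    have := congrFun hw 0; simpa [cross_apply] using this
  have B1 : w 2 * x 0 - w 0 * x 2 = 0 := by
    have := congrFun hw 1; simpa [cross_apply] using this
  have B2 : w 0 * x 1 - w 1 * x 0 = 0 := by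
    have := congrFun hw 2; simpa [cross_apply] using this
  obtain ⟨j, hj⟩ := Function.ne_iff.mp hx
  have hj : x j ≠ 0 := hj
  have key : ∀ i : Fin 3, (v ⨯₃ w) i * x j = 0 := by
    intro i
    fin_cases i <;> fin_cases j <;> simp only [cross_apply] <;>
      first
      | (show (v 1 * w 2 - v 2 * w 1) * x 0 = 0; linear_combination v 1 * B1 + w 0 * A0 + v 2 * B2)
      | (show (v 1 * w 2 - v 2 * w 1) * x 1 = 0; linear_combination w 1 * A0 - v 1 * B0)
      | (show (v 1 * w 2 - v 2 * w 1) * x 2 = 0; linear_combination w 2 * A0 - v 2 * B0)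
      | (show (v 2 * w 0 - v 0 * w 2) * x 1 = 0; linear_combination v 2 * B2 + w 1 * A1 + v 0 * B0)
      | (show (v 2 * w 0 - v 0 * w 2) * x 0 = 0; linear_combination w 0 * A1 - v 0 * B1)
      | (show (v 2 * w 0 - v 0 * w 2) * x 2 = 0; linear_combination w 2 * A1 - v 2 * B1)
      | (show (v 0 * w 1 - v 1 * w 0) * x 2 = 0; linear_combination v 0 * B0 + w 2 * A2 + v 1 * B1)
      | (show (v 0 * w 1 - v 1 * w 0) * x 0 = 0; linear_combination w 0 * A2 - v 0 * B2)
      | (show (v 0 * w 1 - v 1 * w 0) * x 1 = 0; linear_combination w 1 * A2 - v 1 * B2)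
  funext i
  have h0 : (v ⨯₃ w) i * x j = 0 := key i
  exact (mul_eq_zero.mp h0).resolve_right hj

/-- `Ā = (1/2)(tr(A)·I - A)`. -/
noncomputable def abar (A : Matrix (Fin 3) (Fin 3) ℝ) : Matrix (Fin 3) (Fin 3) ℝ :=
  (1/2 : ℝ) • (Matrix.trace A • (1 : Matrix (Fin 3) (Fin 3) ℝ) - A)

/-- The quadratic form of `Ā` is a combination of squared cross products (Lagrange's
identity). -/
lemma quadform (rm ra x : Fin 3 → ℝ) (ρ₁ ρ₂ : ℝ) :
    x ⬝ᵥ (abar (ρ₁ • Matrix.vecMulVec rm rm + ρ₂ • Matrix.vecMulVec ra ra)) *ᵥ x =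
      (1/2) * (ρ₁ * ((rm ⨯₃ x) ⬝ᵥ (rm ⨯₃ x)) + ρ₂ * ((ra ⨯₃ x) ⬝ᵥ (ra ⨯₃ x))) := by
  simp [abar, dotProduct, Matrix.mulVec, Matrix.trace, Matrix.diag,
    Matrix.vecMulVec_apply, Matrix.one_apply, Fin.sum_univ_three, cross_apply]
  ring

lemma herm_aux (rm ra : Fin 3 → ℝ) (ρ₁ ρ₂ : ℝ) :
    (abar (ρ₁ • Matrix.vecMulVec rm rm + ρ₂ • Matrix.vecMulVec ra ra)).IsHermitian := by
  ext i j
  fin_cases i <;> fin_cases j <;>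
    simp [abar, Matrix.conjTranspose_apply, Matrix.vecMulVec_apply, Matrix.one_apply,
      Matrix.trace, Matrix.diag, Fin.sum_univ_three] <;> ring

/-- For `ρ₁, ρ₂ > 0` and `A = ρ₁ r_m r_mᵀ + ρ₂ r_a r_aᵀ`, the matrix `Ā` is positive
definite iff `r_m, r_a` are linearly independent, equivalently `r_m × r_a ≠ 0`. -/
theorem stmt7 (rm ra : Fin 3 → ℝ) (ρ₁ ρ₂ : ℝ) (hρ₁ : 0 < ρ₁) (hρ₂ : 0 < ρ₂) :
    ((abar (ρ₁ • Matrix.vecMulVec rm rm + ρ₂ • Matrix.vecMulVec ra ra)).PosDef ↔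
      LinearIndependent ℝ ![rm, ra]) ∧
    (LinearIndependent ℝ ![rm, ra] ↔ rm ⨯₃ ra ≠ 0) := by
  have hiff : LinearIndependent ℝ ![rm, ra] ↔ rm ⨯₃ ra ≠ 0 :=
    crossProduct_ne_zero_iff_linearIndependent.symm
  refine ⟨?_, hiff⟩
  rw [hiff]
  constructor
  · -- PosDef → cross ≠ 0
    intro hPD hc
    -- find a nonzero x with both cross products zero
    obtain ⟨x, hx, hvx, hwx⟩ : ∃ x : Fin 3 → ℝ, x ≠ 0 ∧ rm ⨯₃ x = 0 ∧ ra ⨯₃ x = 0 := by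
      by_cases hrm : rm = 0
      · by_cases hra : ra = 0
        · refine ⟨![1, 0, 0], ?_, ?_, ?_⟩
          · intro h; have := congrFun h 0; simp at this
          · simp [hrm]
          · simp [hra]
        · exact ⟨ra, hra, by simp [hrm], cross_self ra⟩
      · refine ⟨rm, hrm, cross_self rm, ?_⟩
        have := cross_anticomm rm ra
        rw [hc] at this
        simpa using this.symm
    have hpos := hPD.dotProduct_mulVec_pos hx
    rw [show star x = x from rfl, quadform rm ra x ρ₁ ρ₂, hvx, hwx] at hpos
    simp at hpos
  · -- cross ≠ 0 → PosDef
    intro hc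
    refine PosDef.of_dotProduct_mulVec_pos (herm_aux rm ra ρ₁ ρ₂) ?_
    intro x hx
    rw [show star x = x from rfl, quadform rm ra x ρ₁ ρ₂]
    have ha : 0 ≤ (rm ⨯₃ x) ⬝ᵥ (rm ⨯₃ x) := by
      simpa using dotProduct_self_star_nonneg (rm ⨯₃ x)
    have hb : 0 ≤ (ra ⨯₃ x) ⬝ᵥ (ra ⨯₃ x) := by
      simpa using dotProduct_self_star_nonneg (ra ⨯₃ x)
    rcases ha.lt_or_eq with h | h
    · nlinarith
    rcases hb.lt_or_eq with h' | h'
    · nlinarith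
    exfalso
    apply hc
    exact cross_aux rm ra x hx (dotProduct_self_eq_zero.mp h.symm)
      (dotProduct_self_eq_zero.mp h'.symm)
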